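/- Let G = A *_C B with A, B finite groups and C = S ∈ Syl_p(A) ∩ Syl_p(B). If X ≤ S, g ∈ G, and X^g ≤ S, then the conjugation map c_g : X → X^g can be written as a composite of conjugation maps between subgroups of S induced by elements of A and elements of B. Equivalently, the fusion system F_S(G) is generated by F_S(A) and F_S(B). -/

import Mathlib

open Monoid PushoutI

namespace Stmt5Aux

variable {ι : Type*} {G : ι → Type*} {H : Type*} [Group H] [∀ i, Group (G i)]

/-- product of a list of letters in the pushout -/
def P (φ : ∀ i, H →* G i) (L : List (Σ i, G i)) : PushoutI φ :=
  (L.map fun l => of (φ := φ) l.1 l.2).prod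

theorem P_nil (φ : ∀ i, H →* G i) : P φ ([] : List (Σ i, G i)) = 1 := rfl

theorem P_cons (φ : ∀ i, H →* G i) (l : Σ i, G i) (L : List (Σ i, G i)) :
    P φ (l :: L) = of l.1 l.2 * P φ L := by
  simp [P]

theorem ofCoprodI_word_prod (φ : ∀ i, H →* G i) (w : Monoid.CoprodI.Word G) :
    ofCoprodI (φ := φ) w.prod = P φ w.toList := by
  rw [Monoid.CoprodI.Word.prod, map_list_prod, List.map_map, P]
  congr 1

theorem P_append (φ : ∀ i, H →* G i) (L₁ L₂ : List (Σ i, G i)) :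
    P φ (L₁ ++ L₂) = P φ L₁ * P φ L₂ := by
  simp [P]

theorem P_inv (φ : ∀ i, H →* G i) (L : List (Σ i, G i)) :
    P φ ((L.map fun l => (⟨l.1, l.2⁻¹⟩ : Σ i, G i)).reverse) = (P φ L)⁻¹ := by
  induction L with
  | nil => simp [P]
  | cons l L ih =>
    rw [List.map_cons, List.reverse_cons, P_append, ih, P_cons, P_cons, P_nil, mul_one, mul_inv_rev]
    congr 1

theorem conj_not_base (φ : ∀ i, H →* G i) (hφ : ∀ i, Function.Injective (φ i))
    (L : List (Σ i, G i)) (h1 : ∀ l ∈ L, l.2 ≠ 1)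
    (hc : L.Chain' fun l l' => l.1 ≠ l'.1)
    (hr : ∀ l ∈ L, l.2 ∉ (φ l.1).range)
    {i : ι} {y : G i} (hy : y ∉ (φ i).range)
    (hhead : ∀ l ∈ L.head?, i ≠ l.1) :
    (P φ L)⁻¹ * of i y * P φ L ∉ (base φ).range := by
  intro hmem
  have hy1 : y ≠ 1 := fun h => hy (h ▸ one_mem _)
  set Linv : List (Σ i, G i) := (L.map fun l => ⟨l.1, l.2⁻¹⟩).reverse with hLinv
  have hmemLinv : ∀ l ∈ Linv, ∃ l' ∈ L, l = ⟨l'.1, l'.2⁻¹⟩ := by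
    intro l hl
    rw [hLinv, List.mem_reverse, List.mem_map] at hl
    obtain ⟨l', hl', rfl⟩ := hl
    exact ⟨l', hl', rfl⟩
  set W : Monoid.CoprodI.Word G :=
    { toList := Linv ++ ⟨i, y⟩ :: L
      ne_one := by
        intro l hl
        rcases List.mem_append.1 hl with hl | hl
        · obtain ⟨l', hl', rfl⟩ := hmemLinv l hl
          exact inv_ne_one.2 (h1 l' hl')
        · rcases List.mem_cons.1 hl with rfl | hl
          · exact hy1
          · exact h1 l hl
      chain_ne := by
        refine List.isChain_append.2 ⟨?_, ?_, ?_⟩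
        · rw [hLinv, List.isChain_reverse]
          refine (List.isChain_map (fun l : (Σ i, G i) => (⟨l.1, l.2⁻¹⟩ : Σ i, G i))).2 ?_
          exact hc.imp (fun _ _ h => h.symm)
        · exact List.isChain_cons.2 ⟨fun l hl => hhead l hl, hc⟩
        · intro x hx z hz
          simp only [List.head?_cons, Option.mem_def, Option.some.injEq] at hz
          subst hz
          rw [hLinv, List.getLast?_reverse, List.head?_map] at hx
          rw [Option.mem_def, Option.map_eq_some_iff] at hx
          obtain ⟨l', hl', rfl⟩ := hx
          exact fun h => hhead l' hl' h.symm } with hWdef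
  have hred : Monoid.PushoutI.Reduced φ W := by
    intro l hl
    rcases List.mem_append.1 hl with hl | hl
    · obtain ⟨l', hl', rfl⟩ := hmemLinv l hl
      simpa [inv_mem_iff] using hr l' hl'
    · rcases List.mem_cons.1 hl with rfl | hl
      · exact hy
      · exact hr l hl
  have hPinv : P φ Linv = (P φ L)⁻¹ := hLinv ▸ P_inv φ L
  have hprod : ofCoprodI (φ := φ) W.prod = (P φ L)⁻¹ * of i y * P φ L := by
    rw [ofCoprodI_word_prod]
    show P φ (Linv ++ ⟨i, y⟩ :: L) = _
    rw [P, List.map_append, List.prod_append, ← P, ← P, hPinv, P_cons, mul_assoc]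
  have hempty := Monoid.PushoutI.Reduced.eq_empty_of_mem_range hφ hred (hprod ▸ hmem)
  have : W.toList = [] := by rw [hempty]; rfl
  simp [hWdef] at this


theorem conj_prefix (φ : ∀ i, H →* G i) (hφ : ∀ i, Function.Injective (φ i)) :
    ∀ (L : List (Σ i, G i)), (∀ l ∈ L, l.2 ≠ 1) →
      L.Chain' (fun l l' => l.1 ≠ l'.1) →
      (∀ l ∈ L, l.2 ∉ (φ l.1).range) →
      ∀ x : PushoutI φ, x ∈ (base φ).range →
      (P φ L)⁻¹ * x * P φ L ∈ (base φ).range →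
      ∀ k : ℕ, (P φ (L.take k))⁻¹ * x * P φ (L.take k) ∈ (base φ).range := by
  intro L
  induction L with
  | nil =>
    intro _ _ _ x hx _ k
    simpa [P] using hx
  | cons l L ih =>
    rintro h1 hc hr x ⟨h, rfl⟩ hconj k
    obtain ⟨i, a⟩ := l
    have hofy : ∀ z : G i, of (φ := φ) i (a⁻¹ * z * a) = (of i a)⁻¹ * of i z * of i a := by
      intro z; simp [map_mul, mul_assoc]
    have hyr : a⁻¹ * (φ i h) * a ∈ (φ i).range := by
      by_contra hyn
      refine conj_not_base φ hφ L (fun l hl => h1 l (List.mem_cons_of_mem _ hl))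
        hc.tail (fun l hl => hr l (List.mem_cons_of_mem _ hl)) hyn
        (List.isChain_cons.1 hc).1 ?_
      have hE : (P φ L)⁻¹ * of i (a⁻¹ * (φ i h) * a) * P φ L
          = (P φ (⟨i, a⟩ :: L))⁻¹ * base φ h * P φ (⟨i, a⟩ :: L) := by
        rw [hofy, P_cons, of_apply_eq_base]
        group
      rw [hE]; exact hconj
    obtain ⟨h', hh'⟩ := hyr
    have hx1 : (of (φ := φ) i a)⁻¹ * base φ h * of i a = base φ h' := by
      rw [← of_apply_eq_base φ i h, ← hofy, ← hh', of_apply_eq_base]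
    cases k with
    | zero => simpa [P] using ⟨h, rfl⟩
    | succ k =>
      have hconj' : (P φ L)⁻¹ * base φ h' * P φ L ∈ (base φ).range := by
        have hE : (P φ L)⁻¹ * base φ h' * P φ L
            = (P φ (⟨i, a⟩ :: L))⁻¹ * base φ h * P φ (⟨i, a⟩ :: L) := by
          rw [← hx1, P_cons]; group
        rw [hE]; exact hconj
      have hmain := ih (fun l hl => h1 l (List.mem_cons_of_mem _ hl)) hc.tail
        (fun l hl => hr l (List.mem_cons_of_mem _ hl)) (base φ h') ⟨h', rfl⟩ hconj' k
      have hE : (P φ ((⟨i, a⟩ :: L).take (k + 1)))⁻¹ * base φ h * P φ ((⟨i, a⟩ :: L).take (k + 1))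
          = (P φ (L.take k))⁻¹ * base φ h' * P φ (L.take k) := by
        rw [List.take_succ_cons, P_cons, ← hx1]; group
      rw [hE]; exact hmain

theorem normalWord_letter_not_range (φ : ∀ i, H →* G i) {d : NormalWord.Transversal φ}
    (n : NormalWord d) : ∀ l ∈ n.toList, l.2 ∉ (φ l.1).range := by
  rintro ⟨i, a⟩ hl ⟨h, ha⟩
  simp only at ha
  obtain rfl : φ i h = a := ha
  have hset := n.normalized i (φ i h) hl
  have hne := n.ne_one ⟨i, φ i h⟩ hl
  have hinj := (d.compl i).1
  have hpair : ((⟨⟨φ i h, ⟨h, rfl⟩⟩, ⟨1, d.one_mem i⟩⟩ :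
        ((φ i).range : Set (G i)) × (d.set i)))
      = ⟨⟨1, one_mem _⟩, ⟨φ i h, hset⟩⟩ := by
    apply hinj
    simp
  have h2 := congrArg (fun p : ((φ i).range : Set (G i)) × (d.set i) => (p.2 : G i)) hpair
  simp only at h2
  exact hne h2.symm

end Stmt5Aux

open Stmt5Aux

/-- Let `G = A *_S B` with `A = 𝒢 true`, `B = 𝒢 false` finite groups and
`S = C` a common Sylow `p`-subgroup.  If `X ≤ S`, `g ∈ G` and `X^g ≤ S`, then the
conjugation map `c_g : X → X^g` is a composite of conjugation maps between subgroups of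
`S` induced by elements of `A` and elements of `B`: there is a list `w` of elements of
`G`, each lying in (the image of) `A` or `B`, whose product induces the same conjugation
on `X` as `g`, and all intermediate conjugates of `X` under the partial products lie in
`S`.  Equivalently, `F_S(G) = ⟨F_S(A), F_S(B)⟩`. -/
theorem stmt_5 {C : Type*} {G : Bool → Type*} [Group C] [Fintype C]
    [∀ i, Group (G i)] [∀ i, Fintype (G i)]
    (p : ℕ) [Fact p.Prime]
    (φ : ∀ i, C →* G i) (hφ : ∀ i, Function.Injective (φ i))
    (hpC : IsPGroup p C) (hind : ∀ i, ¬ p ∣ (φ i).range.index)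
    (X : Subgroup (PushoutI φ)) (hX : (X : Set (PushoutI φ)) ⊆ Set.range (base φ))
    (g : PushoutI φ) (hXg : (fun x => g⁻¹ * x * g) '' X ⊆ Set.range (base φ)) :
    ∃ w : List (PushoutI φ),
      (∀ u ∈ w, u ∈ Set.range (of (φ := φ) true) ∪ Set.range (of (φ := φ) false)) ∧
      (∀ x ∈ X, g⁻¹ * x * g = w.prod⁻¹ * x * w.prod) ∧
      (∀ k : ℕ, k ≤ w.length →
        (fun x => (w.take k).prod⁻¹ * x * (w.take k).prod) '' X ⊆
          Set.range (base φ)) := by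
  classical
  obtain ⟨d⟩ := NormalWord.transversal_nonempty φ hφ
  set n : NormalWord d := g • NormalWord.empty with hn
  have hg : Monoid.PushoutI.NormalWord.prod n = g := by
    rw [hn, NormalWord.prod_smul, NormalWord.prod_empty, mul_one]
  have hgdecomp : g = base φ n.head * P φ n.toList := by
    rw [← hg]
    rw [show Monoid.PushoutI.NormalWord.prod n
        = base φ n.head * ofCoprodI n.toWord.prod from rfl]
    rw [ofCoprodI_word_prod]
  refine ⟨base φ n.head :: n.toList.map (fun l => of (φ := φ) l.1 l.2), ?_, ?_, ?_⟩
  · intro u hu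
    simp only [Set.mem_union, Set.mem_range]
    rcases List.mem_cons.1 hu with rfl | hu
    · exact Or.inl ⟨φ true n.head, of_apply_eq_base φ true n.head⟩
    · rw [List.mem_map] at hu
      obtain ⟨⟨i, a⟩, _, rfl⟩ := hu
      cases i
      · exact Or.inr ⟨a, rfl⟩
      · exact Or.inl ⟨a, rfl⟩
  · have hwprod : (base φ n.head :: n.toList.map fun l => of (φ := φ) l.1 l.2).prod = g := by
      rw [List.prod_cons]
      exact hgdecomp.symm
    intro x _
    rw [hwprod]
  · intro k _
    match k with
    | 0 =>
      rintro u ⟨x, hx, rfl⟩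
      simpa using hX hx
    | (j + 1) =>
      rintro u ⟨x, hx, rfl⟩
      obtain ⟨c, hc⟩ := hX hx
      have hx1 : (base φ n.head)⁻¹ * x * base φ n.head
          = base φ (n.head⁻¹ * c * n.head) := by
        rw [← hc]; simp [map_mul, mul_assoc]
      have hconj : (P φ n.toList)⁻¹ * base φ (n.head⁻¹ * c * n.head) * P φ n.toList
          ∈ (base φ).range := by
        have hE : (P φ n.toList)⁻¹ * base φ (n.head⁻¹ * c * n.head) * P φ n.toList
            = g⁻¹ * x * g := by
          rw [hgdecomp, ← hx1]; group
        obtain ⟨e, he⟩ := hXg ⟨x, hx, rfl⟩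
        exact ⟨e, he.trans hE.symm⟩
      have hpref := conj_prefix φ hφ n.toList n.ne_one n.chain_ne
        (normalWord_letter_not_range φ n) (base φ (n.head⁻¹ * c * n.head))
        ⟨n.head⁻¹ * c * n.head, rfl⟩ hconj j
      have hE2 : ((base φ n.head :: n.toList.map fun l => of (φ := φ) l.1 l.2).take (j + 1)).prod
          = base φ n.head * P φ (n.toList.take j) := by
        rw [List.take_succ_cons, List.prod_cons, ← List.map_take]
        rfl
      have hE3 : (base φ n.head * P φ (n.toList.take j))⁻¹ * x
            * (base φ n.head * P φ (n.toList.take j))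
          = (P φ (n.toList.take j))⁻¹ * base φ (n.head⁻¹ * c * n.head)
            * P φ (n.toList.take j) := by
        rw [← hx1]; group
      obtain ⟨e, he⟩ := hpref
      exact ⟨e, by simp only [hE2, hE3]; exact he⟩
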